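/- Let n, m, j ∈ ℕ with 1 ≤ j ≤ m ≤ n, and let t1, t2, t4 ∈ ℂ. Assume t1+t2, t1+t4, and t1+1−t4−m all lie outside {0, −1, …, −(n−1)}, and that t1+t2 ∉ {0, −1, …, −(2n−m−1)}. Then W_n(t4+j−1; t1, t2, 1−t4−m, t4) = 0; that is, in the variable x = −z², the Wilson polynomial with third parameter 1−t4−m vanishes at the m points x = −(t4+j−1)², j = 1, …, m. -/
import Mathlib


open Finset

/-- Pochhammer symbol `(a)_k = a (a+1) ⋯ (a+k-1)`. -/
noncomputable def poch (a : ℂ) (k : ℕ) : ℂ := ∏ i ∈ Finset.range k, (a + i)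

/-- The Wilson polynomial `W_n(z; t1,t2,t3,t4)` in the variable `z` (with `x = -z²`). -/
noncomputable def wilson (n : ℕ) (z t1 t2 t3 t4 : ℂ) : ℂ :=
  poch (t1 + t2) n * poch (t1 + t3) n * poch (t1 + t4) n *
    ∑ k ∈ Finset.range (n + 1),
      (poch (-(n : ℂ)) k * poch (t1 + t2 + t3 + t4 + (n : ℂ) - 1) k *
        poch (t1 + z) k * poch (t1 - z) k) /
      ((k.factorial : ℂ) * poch (t1 + t2) k * poch (t1 + t3) k * poch (t1 + t4) k)

open Polynomial fwdDiff

lemma poch_ne_zero {a : ℂ} {k : ℕ} (h : ∀ i : ℕ, i < k → a + i ≠ 0) : poch a k ≠ 0 :=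
  Finset.prod_ne_zero_iff.2 fun i hi => h i (Finset.mem_range.1 hi)

lemma poch_add (a : ℂ) (s t : ℕ) : poch a (s + t) = poch a s * poch (a + s) t := by
  unfold poch
  rw [Finset.prod_range_add]
  congr 1
  exact Finset.prod_congr rfl fun i _ => by push_cast; ring

lemma poch_swap (a : ℂ) (s k : ℕ) :
    poch a s * poch (a + s) k = poch a k * poch (a + k) s := by
  rw [← poch_add, ← poch_add, Nat.add_comm]

lemma poch_neg_nat {n k : ℕ} (hk : k ≤ n) :
    poch (-(n : ℂ)) k = (-1) ^ k * k.factorial * n.choose k := by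
  unfold poch
  have : ∀ i ∈ Finset.range k, (-(n:ℂ) + i) = (-1) * ((n - i : ℕ) : ℂ) := by
    intro i hi
    have hi' : i ≤ n := le_trans (Nat.le_of_lt (Finset.mem_range.1 hi)) hk
    rw [Nat.cast_sub hi']
    ring
  rw [Finset.prod_congr rfl this, Finset.prod_mul_distrib, Finset.prod_const,
    ← Nat.cast_prod, ← Nat.descFactorial_eq_prod_range,
    Nat.descFactorial_eq_factorial_mul_choose]
  simp [Finset.card_range]
  ring

lemma fwdDiff_eval (P : Polynomial ℂ) :
    Δ_[1] (fun k : ℕ => P.eval (k : ℂ)) = fun k : ℕ => (P.comp (X + C 1) - P).eval (k : ℂ) := by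
  funext k
  simp only [fwdDiff, eval_sub, eval_comp, eval_add, eval_X, eval_C]
  push_cast
  ring_nf

lemma fwdDiff_iter_poly (n : ℕ) : ∀ P : Polynomial ℂ, P.natDegree < n →
    (fwdDiff 1)^[n] (fun k : ℕ => P.eval (k : ℂ)) = fun _ => 0 := by
  induction n with
  | zero => exact fun P hP => absurd hP (Nat.not_lt_zero _)
  | succ n IH =>
    intro P hP
    rw [Function.iterate_succ_apply]
    rw [show Δ_[(1:ℕ)] (fun k : ℕ => P.eval (k : ℂ)) = _ from fwdDiff_eval P]
    set Q := P.comp (X + C 1) - P with hQdef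
    by_cases hQ : Q = 0
    · rw [hQ]
      simp only [eval_zero]
      exact Function.iterate_fixed (by funext x; simp [fwdDiff]) n
    · apply IH
      have hP0 : P ≠ 0 := by
        rintro rfl
        exact hQ (by simp [hQdef])
      have hPd : P.natDegree ≠ 0 := by
        intro h
        apply hQ
        rw [hQdef, Polynomial.eq_C_of_natDegree_eq_zero h]
        simp
      have hcompd : (P.comp (X + C 1)).natDegree = P.natDegree := by
        rw [natDegree_comp, natDegree_X_add_C, mul_one]
      have hlc : (P.comp (X + C 1)).leadingCoeff = P.leadingCoeff := by
        rw [leadingCoeff_comp (by rw [natDegree_X_add_C]; exact one_ne_zero)]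
        rw [(monic_X_add_C (1:ℂ)).leadingCoeff, one_pow, mul_one]
      have hcomp0 : P.comp (X + C 1) ≠ 0 := by
        intro h
        apply hP0
        rw [← leadingCoeff_eq_zero, ← hlc, h, leadingCoeff_zero]
      have hdeq : (P.comp (X + C 1)).degree = P.degree := by
        rw [degree_eq_natDegree hcomp0, degree_eq_natDegree hP0, hcompd]
      have := Polynomial.degree_sub_lt hdeq hcomp0 hlc
      rw [hdeq] at this
      have h2 : Q.natDegree < P.natDegree := natDegree_lt_natDegree hQ this
      omega

lemma alt_sum_eval {n : ℕ} (P : Polynomial ℂ) (hP : P.natDegree < n) :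
    ∑ k ∈ Finset.range (n + 1), (-1 : ℂ) ^ k * (n.choose k : ℂ) * P.eval (k : ℂ) = 0 := by
  have h0 := fwdDiff_iter_eq_sum_shift (1 : ℕ) (fun k : ℕ => P.eval (k : ℂ)) n 0
  rw [fwdDiff_iter_poly n P hP] at h0
  have key : ∑ k ∈ Finset.range (n + 1), (-1 : ℂ) ^ k * (n.choose k : ℂ) * P.eval (k : ℂ)
      = (-1 : ℂ) ^ n * ∑ k ∈ Finset.range (n + 1),
          ((-1 : ℤ) ^ (n - k) * (n.choose k : ℤ)) • P.eval (((0 + k • 1 : ℕ) : ℂ)) := by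
    rw [Finset.mul_sum]
    refine Finset.sum_congr rfl fun k hk => ?_
    have hk' : k ≤ n := by simpa [Nat.lt_succ_iff] using Finset.mem_range.1 hk
    have h1 : (-1 : ℂ) ^ n = (-1) ^ (n - k) * (-1) ^ k := by
      rw [← pow_add, Nat.sub_add_cancel hk']
    have h2 : (-1 : ℂ) ^ (n - k) * (-1) ^ (n - k) = 1 := by
      rw [← pow_add, ← two_mul, pow_mul]; simp
    rw [zsmul_eq_mul]
    push_cast
    simp only [zero_add, smul_eq_mul, mul_one, Nat.cast_id]
    calc (-1 : ℂ) ^ k * (n.choose k : ℂ) * P.eval (k : ℂ)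
        = ((-1 : ℂ) ^ (n - k) * (-1) ^ (n - k)) * ((-1) ^ k * (n.choose k : ℂ) * P.eval (k : ℂ)) := by
          rw [h2, one_mul]
      _ = (-1 : ℂ) ^ n * ((-1) ^ (n - k) * (n.choose k : ℂ) * P.eval (k : ℂ)) := by rw [h1]; ring
  rw [key, ← h0, mul_zero]

lemma eval_prod_lin (u : ℂ) (s : ℕ) (x : ℂ) :
    (∏ i ∈ Finset.range s, (X + C (u + i))).eval x = poch (u + x) s := by
  rw [eval_prod]
  exact Finset.prod_congr rfl fun i _ => by simp only [eval_add, eval_X, eval_C]; ring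

theorem wilson_diophantine_zeros (n m j : ℕ) (hj : 1 ≤ j) (hjm : j ≤ m) (hmn : m ≤ n)
    (t1 t2 t4 : ℂ)
    (h12 : ∀ k : ℕ, k < n → t1 + t2 + k ≠ 0)
    (h14 : ∀ k : ℕ, k < n → t1 + t4 + k ≠ 0)
    (h13 : ∀ k : ℕ, k < n → t1 + 1 - t4 - (m : ℂ) + k ≠ 0)
    (h12' : ∀ k : ℕ, k < 2 * n - m → t1 + t2 + k ≠ 0) :
    wilson n (t4 + (j : ℂ) - 1) t1 t2 (1 - t4 - (m : ℂ)) t4 = 0 := by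
  clear h12'
  set c : ℂ := t1 + t2 with hc
  set a : ℂ := t1 + t4 with ha
  set b : ℂ := t1 + 1 - t4 - (m : ℂ) with hb
  have hcne : ∀ s : ℕ, s ≤ n → poch c s ≠ 0 := fun s hs =>
    poch_ne_zero fun i hi => h12 i (lt_of_lt_of_le hi hs)
  have hane : ∀ s : ℕ, s ≤ n → poch a s ≠ 0 := fun s hs =>
    poch_ne_zero fun i hi => h14 i (lt_of_lt_of_le hi hs)
  have hbne : ∀ s : ℕ, s ≤ n → poch b s ≠ 0 := fun s hs =>
    poch_ne_zero fun i hi => h13 i (lt_of_lt_of_le hi hs)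
  set D : ℂ := poch c (n - m) * poch a (j - 1) * poch b (m - j) with hD
  have hDne : D ≠ 0 :=
    mul_ne_zero (mul_ne_zero (hcne _ (by omega)) (hane _ (by omega))) (hbne _ (by omega))
  set R : Polynomial ℂ :=
    (∏ i ∈ Finset.range (n - m), (X + C (c + i))) *
      ((∏ i ∈ Finset.range (j - 1), (X + C (a + i))) *
        (∏ i ∈ Finset.range (m - j), (X + C (b + i)))) with hR
  have hRdeg : R.natDegree < n := by
    have h1 : (∏ i ∈ Finset.range (n - m), (X + C (c + (i : ℂ)))).natDegree ≤ n - m := by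
      refine le_trans (natDegree_prod_le _ _) ?_
      refine le_trans (Finset.sum_le_sum fun i _ => le_of_eq (natDegree_X_add_C _)) ?_
      simp
    have h2 : (∏ i ∈ Finset.range (j - 1), (X + C (a + (i : ℂ)))).natDegree ≤ j - 1 := by
      refine le_trans (natDegree_prod_le _ _) ?_
      refine le_trans (Finset.sum_le_sum fun i _ => le_of_eq (natDegree_X_add_C _)) ?_
      simp
    have h3 : (∏ i ∈ Finset.range (m - j), (X + C (b + (i : ℂ)))).natDegree ≤ m - j := by
      refine le_trans (natDegree_prod_le _ _) ?_
      refine le_trans (Finset.sum_le_sum fun i _ => le_of_eq (natDegree_X_add_C _)) ?_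
      simp
    calc R.natDegree ≤ _ + (_ + _) :=
          le_trans (natDegree_mul_le) (by gcongr; exact natDegree_mul_le)
      _ < n := by omega
  have hReval : ∀ k : ℕ,
      R.eval (k : ℂ) = poch (c + k) (n - m) * (poch (a + k) (j - 1) * poch (b + k) (m - j)) := by
    intro k
    rw [hR, eval_mul, eval_mul, eval_prod_lin, eval_prod_lin, eval_prod_lin]
  have hterm : ∀ k ∈ Finset.range (n + 1),
      (poch (-(n : ℂ)) k * poch (t1 + t2 + (1 - t4 - (m : ℂ)) + t4 + (n : ℂ) - 1) k *
        poch (t1 + (t4 + (j : ℂ) - 1)) k * poch (t1 - (t4 + (j : ℂ) - 1)) k) /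
      ((k.factorial : ℂ) * poch (t1 + t2) k * poch (t1 + (1 - t4 - (m : ℂ))) k *
        poch (t1 + t4) k)
      = ((-1) ^ k * (n.choose k : ℂ) * R.eval (k : ℂ)) / D := by
    intro k hk
    have hk' : k ≤ n := by
      have := Finset.mem_range.1 hk; omega
    have e1 : t1 + t2 + (1 - t4 - (m : ℂ)) + t4 + (n : ℂ) - 1 = c + ((n - m : ℕ) : ℂ) := by
      rw [hc, Nat.cast_sub hmn]; ring
    have e2 : t1 + (t4 + (j : ℂ) - 1) = a + ((j - 1 : ℕ) : ℂ) := by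
      rw [ha, Nat.cast_sub hj]; push_cast; ring
    have e3 : t1 - (t4 + (j : ℂ) - 1) = b + ((m - j : ℕ) : ℂ) := by
      rw [hb, Nat.cast_sub hjm]; ring
    have e4 : t1 + (1 - t4 - (m : ℂ)) = b := by rw [hb]; ring
    rw [e1, e2, e3, e4, poch_neg_nat hk', hReval k]
    have hM : (k.factorial : ℂ) * poch (t1 + t2) k * poch b k * poch (t1 + t4) k ≠ 0 :=
      mul_ne_zero (mul_ne_zero (mul_ne_zero (by exact_mod_cast k.factorial_ne_zero)
        (hcne k hk')) (hbne k hk')) (hane k hk')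
    rw [div_eq_div_iff hM hDne]
    have hs1 := poch_swap c (n - m) k
    have hs2 := poch_swap a (j - 1) k
    have hs3 := poch_swap b (m - j) k
    have key : (poch c (n - m) * poch (c + ((n - m : ℕ) : ℂ)) k) *
        ((poch a (j - 1) * poch (a + ((j - 1 : ℕ) : ℂ)) k) *
          (poch b (m - j) * poch (b + ((m - j : ℕ) : ℂ)) k))
        = (poch c k * poch (c + (k : ℂ)) (n - m)) *
          ((poch a k * poch (a + (k : ℂ)) (j - 1)) *
            (poch b k * poch (b + (k : ℂ)) (m - j))) := by
      rw [hs1, hs2, hs3]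
    rw [hc] at key ⊢
    rw [ha] at key ⊢
    linear_combination ((-1 : ℂ) ^ k * (k.factorial : ℂ) * (n.choose k : ℂ)) * key
  unfold wilson
  rw [Finset.sum_congr rfl hterm, ← Finset.sum_div]
  rw [alt_sum_eval R hRdeg, zero_div, mul_zero]
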